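/- For all m, n ≥ 3 there exist regular languages L' and L, with alphabets Σ_{L'} and Σ_L each of cardinality 3 whose intersection has cardinality 2 (so Σ_{L'} \ Σ_L and Σ_L \ Σ_{L'} are both nonempty), such that L' has quotient complexity m, L has quotient complexity n, κ(L' ∪ L) = (m+1)(n+1), and κ(L' ⊕ L) = (m+1)(n+1), where L' ⊕ L = (L' \ L) ∪ (L \ L') is the symmetric difference. -/

import Mathlib

/-- The alphabet of a language: letters occurring in some word of `L`. -/
def alphabetOf {α : Type*} (L : Language α) : Set α :=
  {a | ∃ u v : List α, u ++ [a] ++ v ∈ L}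

/-- The left quotient of `L` by a word `w`. -/
def leftQuotient {α : Type*} (L : Language α) (w : List α) : Language α :=
  {x | w ++ x ∈ L}

/-- The set of left quotients of `L` by words over the alphabet of `L`. -/
def quotientSet {α : Type*} (L : Language α) : Set (Language α) :=
  {K | ∃ w : List α, (∀ a ∈ w, a ∈ alphabetOf L) ∧ K = leftQuotient L w}

/-- `L` is regular with quotient complexity `m`: the set of its left quotients
(by words over its own alphabet) is finite of cardinality exactly `m`. -/
def HasComplexity {α : Type*} (L : Language α) (m : ℕ) : Prop :=
  (quotientSet L).Finite ∧ (quotientSet L).ncard = m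

/-- All words whose letters lie in `S`. -/
def starOf {α : Type*} (S : Set α) : Language α :=
  {w | ∀ a ∈ w, a ∈ S}

/-- A nonempty language `L` is a right ideal if `L · Σ_L^* = L`. -/
def IsRightIdeal {α : Type*} (L : Language α) : Prop :=
  (∃ w, w ∈ L) ∧ L * starOf (alphabetOf L) = L

/-- A nonempty language `L` is a left ideal if `Σ_L^* · L = L`. -/
def IsLeftIdeal {α : Type*} (L : Language α) : Prop :=
  (∃ w, w ∈ L) ∧ starOf (alphabetOf L) * L = L

/-- A nonempty language `L` is a two-sided ideal if `Σ_L^* · L · Σ_L^* = L`. -/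
def IsTwoSidedIdeal {α : Type*} (L : Language α) : Prop :=
  (∃ w, w ∈ L) ∧ starOf (alphabetOf L) * L * starOf (alphabetOf L) = L

/-! ### Auxiliary development for the witnesses -/

/-- Main witness language family: words avoiding `f`, with the number of
occurrences of `c` divisible by `m`. -/
def LW (c f : Fin 4) (m : ℕ) : Language (Fin 4) :=
  {w | (∀ a ∈ w, a ≠ f) ∧ w.count c % m = 0}

/-- Quotient family for `LW`. -/
def QW (c f : Fin 4) (m k : ℕ) : Language (Fin 4) :=
  {x | (∀ a ∈ x, a ≠ f) ∧ (k + x.count c) % m = 0}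

lemma cancel_mod (m k k' x : ℕ) (hk : k < m) (hk' : k' < m)
    (h : (k + x) % m = 0) (h' : (k' + x) % m = 0) : k = k' := by
  have h1 : (k + x) % m = (k' + x) % m := by rw [h, h']
  have h2 : k % m = k' % m := Nat.ModEq.add_right_cancel' x h1
  rwa [Nat.mod_eq_of_lt hk, Nat.mod_eq_of_lt hk'] at h2

lemma mem_QW_replicate (c f : Fin 4) (hcf : c ≠ f) (m k : ℕ) (hk : k < m) :
    List.replicate (m - k) c ∈ QW c f m k := by
  constructor
  · intro a ha
    rw [List.eq_of_mem_replicate ha]; exact hcf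
  · rw [List.count_replicate, if_pos (by simp)]
    have : k + (m - k) = m := by omega
    rw [this, Nat.mod_self]

lemma QW_injOn (c f : Fin 4) (hcf : c ≠ f) (m : ℕ) :
    Set.InjOn (QW c f m) (Set.Iio m) := by
  intro k hk k' hk' h
  have h1 := mem_QW_replicate c f hcf m k hk
  have h2 : List.replicate (m - k) c ∈ QW c f m k' := h ▸ h1
  exact cancel_mod m k k' _ hk hk' h1.2 h2.2

lemma mem_LW_iff (c f : Fin 4) (m : ℕ) (w x : List (Fin 4)) (hw : f ∉ w) :
    (w ++ x ∈ LW c f m) ↔ x ∈ QW c f m (w.count c % m) := by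
  have hw2 : ∀ a ∈ w, a ≠ f := fun a ha h => hw (h ▸ ha)
  have hc : (w ++ x).count c = w.count c + x.count c := List.count_append ..
  constructor
  · rintro ⟨h1, h2⟩
    refine ⟨fun a ha => h1 a (List.mem_append_right _ ha), ?_⟩
    rw [hc] at h2
    rwa [Nat.mod_add_mod]
  · rintro ⟨h1, h2⟩
    refine ⟨fun a ha => ?_, ?_⟩
    · rcases List.mem_append.1 ha with ha | ha
      · exact hw2 a ha
      · exact h1 a ha
    · rw [hc]
      rwa [Nat.mod_add_mod] at h2

lemma leftQuotient_LW (c f : Fin 4) (m : ℕ) (w : List (Fin 4)) (hw : f ∉ w) :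
    leftQuotient (LW c f m) w = QW c f m (w.count c % m) := by
  ext x
  exact mem_LW_iff c f m w x hw

lemma not_mem_LW (c f : Fin 4) (m : ℕ) (w x : List (Fin 4)) (hw : f ∈ w) :
    w ++ x ∉ LW c f m := by
  rintro ⟨h1, -⟩
  exact absurd rfl (h1 f (List.mem_append_left _ hw))

lemma replicate_mem_LW (c f : Fin 4) (hcf : c ≠ f) (m : ℕ) :
    List.replicate m c ∈ LW c f m := by
  refine ⟨fun a ha => ?_, ?_⟩
  · rw [List.eq_of_mem_replicate ha]; exact hcf
  · rw [List.count_replicate, if_pos (by simp), Nat.mod_self]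

lemma alphabetOf_LW (c f : Fin 4) (hcf : c ≠ f) (m : ℕ) (hm : 0 < m) :
    alphabetOf (LW c f m) = {a | a ≠ f} := by
  ext a
  constructor
  · rintro ⟨u, v, h1, -⟩
    exact h1 a (by simp)
  · intro ha
    by_cases hac : a = c
    · subst hac
      refine ⟨[], List.replicate (m - 1) a, ?_⟩
      have : [] ++ [a] ++ List.replicate (m - 1) a = List.replicate m a := by
        simp only [List.nil_append, List.singleton_append, ← List.replicate_succ]
        congr 1
        omega
      rw [this]
      exact replicate_mem_LW a f hcf m
    · exact ⟨[], [], fun b hb => by simp_all, by simp [List.count_singleton]; simp_all⟩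

lemma quotientSet_LW (c f : Fin 4) (hcf : c ≠ f) (m : ℕ) (hm : 0 < m) :
    quotientSet (LW c f m) = QW c f m '' Set.Iio m := by
  ext K
  constructor
  · rintro ⟨w, hw, rfl⟩
    rw [alphabetOf_LW c f hcf m hm] at hw
    have hfw : f ∉ w := fun h => (hw f h) rfl
    exact ⟨w.count c % m, Nat.mod_lt _ hm, (leftQuotient_LW c f m w hfw).symm⟩
  · rintro ⟨k, hk, rfl⟩
    refine ⟨List.replicate k c, ?_, ?_⟩
    · intro a ha
      rw [alphabetOf_LW c f hcf m hm]
      rw [List.eq_of_mem_replicate ha]; exact hcf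
    · rw [leftQuotient_LW c f m _ (fun h => hcf (List.eq_of_mem_replicate h).symm)]
      rw [List.count_replicate, if_pos (by simp), Nat.mod_eq_of_lt hk]

lemma hasComplexity_LW (c f : Fin 4) (hcf : c ≠ f) (m : ℕ) (hm : 0 < m) :
    HasComplexity (LW c f m) m := by
  rw [HasComplexity, quotientSet_LW c f hcf m hm]
  have hfin : (Set.Iio m).Finite := Set.finite_Iio m
  refine ⟨hfin.image _, ?_⟩
  rw [Set.ncard_image_of_injOn (QW_injOn c f hcf m)]
  rw [← Finset.coe_range, Set.ncard_coe_finset, Finset.card_range]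

/-! ### Quotients of the union and symmetric difference -/

/-- Optional quotient: `none` is the empty quotient (after seeing a foreign letter). -/
def QO (c f : Fin 4) (m : ℕ) : Option ℕ → Language (Fin 4)
  | none => ⊥
  | some k => QW c f m k

/-- The index of the quotient of `LW c f m` by `w`. -/
def indOf (c f : Fin 4) (m : ℕ) (w : List (Fin 4)) : Option ℕ :=
  if f ∈ w then none else some (w.count c % m)

lemma mem_LW_iff_QO (c f : Fin 4) (m : ℕ) (w x : List (Fin 4)) :
    w ++ x ∈ LW c f m ↔ x ∈ QO c f m (indOf c f m w) := by
  by_cases hw : f ∈ w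
  · rw [indOf, if_pos hw]
    exact iff_of_false (not_mem_LW c f m w x hw) (fun h => h)
  · rw [indOf, if_neg hw]
    exact mem_LW_iff c f m w x hw

lemma indOf_mem (c f : Fin 4) (m : ℕ) (hm : 0 < m) (w : List (Fin 4)) :
    indOf c f m w ∈ insert none (some '' Set.Iio m) := by
  rw [indOf]
  split
  · exact Set.mem_insert _ _
  · exact Set.mem_insert_of_mem _ ⟨_, Nat.mod_lt _ hm, rfl⟩

/-- Quotient shape for the union. -/
def QU (m n : ℕ) (p : Option ℕ × Option ℕ) : Language (Fin 4) :=
  QO 1 3 m p.1 ⊔ QO 2 0 n p.2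

/-- Quotient shape for the symmetric difference. -/
def QD (m n : ℕ) (p : Option ℕ × Option ℕ) : Language (Fin 4) :=
  (QO 1 3 m p.1 \ QO 2 0 n p.2) ⊔ (QO 2 0 n p.2 \ QO 1 3 m p.1)

lemma leftQuotient_union (m n : ℕ) (w : List (Fin 4)) :
    leftQuotient (LW 1 3 m ⊔ LW 2 0 n) w = QU m n (indOf 1 3 m w, indOf 2 0 n w) := by
  ext x
  show w ++ x ∈ LW 1 3 m ∨ w ++ x ∈ LW 2 0 n ↔ _ ∨ _
  rw [mem_LW_iff_QO 1 3 m w x, mem_LW_iff_QO 2 0 n w x]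
  rfl

lemma leftQuotient_sdiff (m n : ℕ) (w : List (Fin 4)) :
    leftQuotient ((LW 1 3 m \ LW 2 0 n) ⊔ (LW 2 0 n \ LW 1 3 m)) w
      = QD m n (indOf 1 3 m w, indOf 2 0 n w) := by
  ext x
  show (w ++ x ∈ LW 1 3 m ∧ w ++ x ∉ LW 2 0 n) ∨ (w ++ x ∈ LW 2 0 n ∧ w ++ x ∉ LW 1 3 m) ↔ _
  rw [mem_LW_iff_QO 1 3 m w x, mem_LW_iff_QO 2 0 n w x]
  rfl

/-! ### Test words and injectivity -/

def optS (m : ℕ) : Set (Option ℕ) := insert none (some '' Set.Iio m)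

lemma not_mem_LW' (c f : Fin 4) (m : ℕ) (x : List (Fin 4)) (hfx : f ∈ x) :
    x ∉ LW c f m := fun h => (h.1 f hfx) rfl

lemma not_mem_QO (c f : Fin 4) (m : ℕ) (b : Option ℕ) (x : List (Fin 4)) (hfx : f ∈ x) :
    x ∉ QO c f m b := by
  cases b with
  | none => exact fun h => h
  | some k => exact fun h => (h.1 f hfx) rfl

/-- Test word: the foreign letter `g` followed by `m - k` copies of `c`. -/
def tW (c g : Fin 4) (m k : ℕ) : List (Fin 4) := g :: List.replicate (m - k) c

lemma count_tW (c g : Fin 4) (hgc : g ≠ c) (m k : ℕ) :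
    (tW c g m k).count c = m - k := by
  rw [tW, List.count_cons, List.count_replicate, if_pos (by simp)]
  simp [hgc]

lemma add_sub_mod (m k : ℕ) (hk : k < m) : (k + (m - k)) % m = 0 := by
  have : k + (m - k) = m := by omega
  rw [this, Nat.mod_self]

lemma test_mem_QO (c f g : Fin 4) (hcf : c ≠ f) (hgf : g ≠ f) (hgc : g ≠ c)
    (m k : ℕ) (hk : k < m) (a : Option ℕ) (ha : a ∈ optS m) :
    (tW c g m k ∈ QO c f m a) ↔ a = some k := by
  rcases ha with rfl | ⟨k', hk', rfl⟩
  · exact iff_of_false (fun h => h) (by simp)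
  · simp only [QO, Option.some.injEq]
    constructor
    · rintro ⟨-, h2⟩
      rw [count_tW c g hgc m k] at h2
      exact cancel_mod m k' k _ hk' hk h2 (add_sub_mod m k hk)
    · rintro rfl
      refine ⟨fun a ha => ?_, ?_⟩
      · rcases List.mem_cons.1 ha with rfl | ha
        · exact hgf
        · rw [List.eq_of_mem_replicate ha]; exact hcf
      · rw [count_tW c g hgc]
        exact add_sub_mod m _ (by omega)

lemma mem_QU_iff_left (m n : ℕ) (p : Option ℕ × Option ℕ) (x : List (Fin 4))
    (h0 : (0 : Fin 4) ∈ x) : x ∈ QU m n p ↔ x ∈ QO 1 3 m p.1 := by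
  have hb := not_mem_QO 2 0 n p.2 x h0
  show x ∈ QO 1 3 m p.1 ∨ x ∈ QO 2 0 n p.2 ↔ _
  tauto

lemma mem_QU_iff_right (m n : ℕ) (p : Option ℕ × Option ℕ) (x : List (Fin 4))
    (h3 : (3 : Fin 4) ∈ x) : x ∈ QU m n p ↔ x ∈ QO 2 0 n p.2 := by
  have ha := not_mem_QO 1 3 m p.1 x h3
  show x ∈ QO 1 3 m p.1 ∨ x ∈ QO 2 0 n p.2 ↔ _
  tauto

lemma mem_QD_iff_left (m n : ℕ) (p : Option ℕ × Option ℕ) (x : List (Fin 4))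
    (h0 : (0 : Fin 4) ∈ x) : x ∈ QD m n p ↔ x ∈ QO 1 3 m p.1 := by
  have hb := not_mem_QO 2 0 n p.2 x h0
  show (x ∈ QO 1 3 m p.1 ∧ x ∉ QO 2 0 n p.2) ∨ (x ∈ QO 2 0 n p.2 ∧ x ∉ QO 1 3 m p.1) ↔ _
  tauto

lemma mem_QD_iff_right (m n : ℕ) (p : Option ℕ × Option ℕ) (x : List (Fin 4))
    (h3 : (3 : Fin 4) ∈ x) : x ∈ QD m n p ↔ x ∈ QO 2 0 n p.2 := by
  have ha := not_mem_QO 1 3 m p.1 x h3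
  show (x ∈ QO 1 3 m p.1 ∧ x ∉ QO 2 0 n p.2) ∨ (x ∈ QO 2 0 n p.2 ∧ x ∉ QO 1 3 m p.1) ↔ _
  tauto

lemma opt_eq (m : ℕ) (a a' : Option ℕ) (ha : a ∈ optS m) (ha' : a' ∈ optS m)
    (h : ∀ k, k < m → (a = some k ↔ a' = some k)) : a = a' := by
  rcases ha with rfl | ⟨k, hk, rfl⟩
  · rcases ha' with rfl | ⟨k', hk', rfl⟩
    · rfl
    · exact absurd ((h k' hk').2 rfl) (by simp)
  · exact ((h k hk).1 rfl).symm

lemma QU_injOn (m n : ℕ) : Set.InjOn (QU m n) (optS m ×ˢ optS n) := by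
  rintro ⟨a, b⟩ hab ⟨a', b'⟩ hab' h
  obtain ⟨ha, hb⟩ := Set.mem_prod.1 hab
  obtain ⟨ha', hb'⟩ := Set.mem_prod.1 hab'
  have hiff : ∀ x : List (Fin 4), x ∈ QU m n (a, b) ↔ x ∈ QU m n (a', b') := fun x => by rw [h]
  have h1 : a = a' := by
    refine opt_eq m a a' ha ha' (fun k hk => ?_)
    rw [← test_mem_QO 1 3 0 (by decide) (by decide) (by decide) m k hk a ha,
      ← test_mem_QO 1 3 0 (by decide) (by decide) (by decide) m k hk a' ha',
      ← mem_QU_iff_left m n (a, b) _ (by simp [tW]),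
      ← mem_QU_iff_left m n (a', b') _ (by simp [tW])]
    exact hiff _
  have h2 : b = b' := by
    refine opt_eq n b b' hb hb' (fun k hk => ?_)
    rw [← test_mem_QO 2 0 3 (by decide) (by decide) (by decide) n k hk b hb,
      ← test_mem_QO 2 0 3 (by decide) (by decide) (by decide) n k hk b' hb',
      ← mem_QU_iff_right m n (a, b) _ (by simp [tW]),
      ← mem_QU_iff_right m n (a', b') _ (by simp [tW])]
    exact hiff _
  rw [h1, h2]

lemma QD_injOn (m n : ℕ) : Set.InjOn (QD m n) (optS m ×ˢ optS n) := by
  rintro ⟨a, b⟩ hab ⟨a', b'⟩ hab' h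
  obtain ⟨ha, hb⟩ := Set.mem_prod.1 hab
  obtain ⟨ha', hb'⟩ := Set.mem_prod.1 hab'
  have hiff : ∀ x : List (Fin 4), x ∈ QD m n (a, b) ↔ x ∈ QD m n (a', b') := fun x => by rw [h]
  have h1 : a = a' := by
    refine opt_eq m a a' ha ha' (fun k hk => ?_)
    rw [← test_mem_QO 1 3 0 (by decide) (by decide) (by decide) m k hk a ha,
      ← test_mem_QO 1 3 0 (by decide) (by decide) (by decide) m k hk a' ha',
      ← mem_QD_iff_left m n (a, b) _ (by simp [tW]),
      ← mem_QD_iff_left m n (a', b') _ (by simp [tW])]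
    exact hiff _
  have h2 : b = b' := by
    refine opt_eq n b b' hb hb' (fun k hk => ?_)
    rw [← test_mem_QO 2 0 3 (by decide) (by decide) (by decide) n k hk b hb,
      ← test_mem_QO 2 0 3 (by decide) (by decide) (by decide) n k hk b' hb',
      ← mem_QD_iff_right m n (a, b) _ (by simp [tW]),
      ← mem_QD_iff_right m n (a', b') _ (by simp [tW])]
    exact hiff _
  rw [h1, h2]

/-! ### Alphabets of the union and symmetric difference -/

lemma singleton_mem_LW (c f g : Fin 4) (hgf : g ≠ f) (hgc : g ≠ c) (m : ℕ) :
    [g] ∈ LW c f m := by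
  refine ⟨fun a ha => by rw [List.mem_singleton.1 ha]; exact hgf, ?_⟩
  rw [List.count_eq_zero_of_not_mem (by simpa using fun h => hgc h.symm), Nat.zero_mod]

lemma singleton_append_replicate (a : Fin 4) (m : ℕ) (hm : 0 < m) :
    [] ++ [a] ++ List.replicate (m - 1) a = List.replicate m a := by
  simp only [List.nil_append, List.singleton_append, ← List.replicate_succ]
  congr 1
  omega

lemma alphabetOf_union (m n : ℕ) (hm : 0 < m) :
    alphabetOf (LW 1 3 m ⊔ LW 2 0 n) = Set.univ := by
  ext a
  simp only [Set.mem_univ, iff_true]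
  fin_cases a
  · exact ⟨[], [], Or.inl (singleton_mem_LW 1 3 0 (by decide) (by decide) m)⟩
  · refine ⟨[], List.replicate (m - 1) 1, Or.inl ?_⟩
    have h := replicate_mem_LW 1 3 (by decide) m
    rw [← singleton_append_replicate 1 m hm] at h
    exact h
  · exact ⟨[], [], Or.inl (singleton_mem_LW 1 3 2 (by decide) (by decide) m)⟩
  · exact ⟨[], [], Or.inr (singleton_mem_LW 2 0 3 (by decide) (by decide) n)⟩

lemma zero_cons_replicate_mem (m : ℕ) (hm : 0 < m) :
    ((0 : Fin 4) :: List.replicate m 1) ∈ LW 1 3 m := by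
  refine ⟨fun a ha => ?_, ?_⟩
  · rcases List.mem_cons.1 ha with rfl | ha
    · decide
    · rw [List.eq_of_mem_replicate ha]; decide
  · rw [List.count_cons, List.count_replicate, if_pos (by simp)]
    simp [Nat.mod_self]

lemma pair_mem_LA (m : ℕ) : ([0, 2] : List (Fin 4)) ∈ LW 1 3 m := by
  refine ⟨fun a ha => ?_, ?_⟩
  · fin_cases ha <;> decide
  · rw [List.count_eq_zero_of_not_mem (by decide), Nat.zero_mod]

lemma alphabetOf_sdiff (m n : ℕ) (hm : 0 < m) :
    alphabetOf ((LW 1 3 m \ LW 2 0 n) ⊔ (LW 2 0 n \ LW 1 3 m)) = Set.univ := by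
  ext a
  simp only [Set.mem_univ, iff_true]
  fin_cases a
  · exact ⟨[], [], Or.inl ⟨singleton_mem_LW 1 3 0 (by decide) (by decide) m,
      not_mem_LW' 2 0 n _ (by simp)⟩⟩
  · refine ⟨[0], List.replicate (m - 1) 1, Or.inl ⟨?_, ?_⟩⟩
    · have h := zero_cons_replicate_mem m hm
      have he : ((0 : Fin 4) :: List.replicate m 1)
          = [0] ++ [1] ++ List.replicate (m - 1) 1 := by
        conv_lhs => rw [show m = m - 1 + 1 from by omega]
        simp [List.replicate_succ]
      rw [he] at h
      exact h
    · exact not_mem_LW' 2 0 n _ (by simp)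
  · refine ⟨[0], [], Or.inl ⟨?_, not_mem_LW' 2 0 n _ (by simp)⟩⟩
    exact pair_mem_LA m
  · exact ⟨[], [], Or.inr ⟨singleton_mem_LW 2 0 3 (by decide) (by decide) n,
      not_mem_LW' 1 3 m _ (by simp)⟩⟩

/-! ### Reachability -/

lemma reach (m n : ℕ) (hm : 0 < m) (hn : 0 < n) (a b : Option ℕ)
    (ha : a ∈ optS m) (hb : b ∈ optS n) :
    ∃ w : List (Fin 4), indOf 1 3 m w = a ∧ indOf 2 0 n w = b := by
  rcases ha with rfl | ⟨k, hk, rfl⟩ <;> rcases hb with rfl | ⟨l, hl, rfl⟩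
  · exact ⟨[0, 3], by rw [indOf, if_pos (by decide)], by rw [indOf, if_pos (by decide)]⟩
  · refine ⟨3 :: List.replicate l 2, by rw [indOf, if_pos (by simp)], ?_⟩
    rw [indOf, if_neg ?_]
    · rw [List.count_cons, List.count_replicate, if_pos (by simp)]
      simp [Nat.mod_eq_of_lt hl]
    · intro h
      rcases List.mem_cons.1 h with h | h
      · exact absurd h (by decide)
      · exact absurd (List.eq_of_mem_replicate h) (by decide)
  · refine ⟨0 :: List.replicate k 1, ?_, by rw [indOf, if_pos (by simp)]⟩
    rw [indOf, if_neg ?_]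
    · rw [List.count_cons, List.count_replicate, if_pos (by simp)]
      simp [Nat.mod_eq_of_lt hk]
    · intro h
      rcases List.mem_cons.1 h with h | h
      · exact absurd h (by decide)
      · exact absurd (List.eq_of_mem_replicate h) (by decide)
  · refine ⟨List.replicate k 1 ++ List.replicate l 2, ?_, ?_⟩
    · rw [indOf, if_neg ?_]
      · rw [List.count_append, List.count_replicate, if_pos (by simp),
          List.count_replicate, if_neg (by decide)]
        simp [Nat.mod_eq_of_lt hk]
      · intro h
        rcases List.mem_append.1 h with h | h <;>
          exact absurd (List.eq_of_mem_replicate h) (by decide)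
    · rw [indOf, if_neg ?_]
      · rw [List.count_append, List.count_replicate, if_neg (by decide),
          List.count_replicate, if_pos (by simp)]
        simp [Nat.mod_eq_of_lt hl]
      · intro h
        rcases List.mem_append.1 h with h | h <;>
          exact absurd (List.eq_of_mem_replicate h) (by decide)

/-! ### Quotient sets of union and symmetric difference -/

lemma quotientSet_union (m n : ℕ) (hm : 0 < m) (hn : 0 < n) :
    quotientSet (LW 1 3 m ⊔ LW 2 0 n) = QU m n '' (optS m ×ˢ optS n) := by
  ext K
  constructor
  · rintro ⟨w, -, rfl⟩
    exact ⟨(indOf 1 3 m w, indOf 2 0 n w),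
      Set.mem_prod.2 ⟨indOf_mem 1 3 m hm w, indOf_mem 2 0 n hn w⟩,
      (leftQuotient_union m n w).symm⟩
  · rintro ⟨⟨a, b⟩, hab, rfl⟩
    obtain ⟨ha, hb⟩ := Set.mem_prod.1 hab
    obtain ⟨w, hwa, hwb⟩ := reach m n hm hn a b ha hb
    refine ⟨w, fun x _ => ?_, ?_⟩
    · rw [alphabetOf_union m n hm]; trivial
    · rw [leftQuotient_union, hwa, hwb]

lemma quotientSet_sdiff (m n : ℕ) (hm : 0 < m) (hn : 0 < n) :
    quotientSet ((LW 1 3 m \ LW 2 0 n) ⊔ (LW 2 0 n \ LW 1 3 m))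
      = QD m n '' (optS m ×ˢ optS n) := by
  ext K
  constructor
  · rintro ⟨w, -, rfl⟩
    exact ⟨(indOf 1 3 m w, indOf 2 0 n w),
      Set.mem_prod.2 ⟨indOf_mem 1 3 m hm w, indOf_mem 2 0 n hn w⟩,
      (leftQuotient_sdiff m n w).symm⟩
  · rintro ⟨⟨a, b⟩, hab, rfl⟩
    obtain ⟨ha, hb⟩ := Set.mem_prod.1 hab
    obtain ⟨w, hwa, hwb⟩ := reach m n hm hn a b ha hb
    refine ⟨w, fun x _ => ?_, ?_⟩
    · rw [alphabetOf_sdiff m n hm]; trivial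
    · rw [leftQuotient_sdiff, hwa, hwb]

/-! ### Counting -/

lemma optS_eq_coe (m : ℕ) :
    optS m = ↑(insert none ((Finset.range m).image some)) := by
  simp [optS]

lemma prodS_finite (m n : ℕ) : (optS m ×ˢ optS n).Finite := by
  rw [optS_eq_coe m, optS_eq_coe n, ← Finset.coe_product]
  exact Finset.finite_toSet _

lemma prodS_ncard (m n : ℕ) : (optS m ×ˢ optS n).ncard = (m + 1) * (n + 1) := by
  rw [optS_eq_coe m, optS_eq_coe n, ← Finset.coe_product, Set.ncard_coe_finset,
    Finset.card_product]
  have h : ∀ p : ℕ, (insert none ((Finset.range p).image some)).card = p + 1 := by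
    intro p
    rw [Finset.card_insert_of_notMem (by simp),
      Finset.card_image_of_injective _ (Option.some_injective ℕ), Finset.card_range]
  rw [h m, h n]

/-! ### The main theorem -/

/-- the bound `(m+1)(n+1)` for union and symmetric difference is tight,
with witnesses over three-letter alphabets sharing exactly two letters. -/
theorem union_symmDiff_tight (m n : ℕ) (hm : 3 ≤ m) (hn : 3 ≤ n) :
    ∃ L' L : Language (Fin 4),
      (alphabetOf L').ncard = 3 ∧ (alphabetOf L).ncard = 3 ∧
      (alphabetOf L' ∩ alphabetOf L).ncard = 2 ∧
      (alphabetOf L' \ alphabetOf L).Nonempty ∧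
      (alphabetOf L \ alphabetOf L').Nonempty ∧
      HasComplexity L' m ∧ HasComplexity L n ∧
      HasComplexity (L' ⊔ L) ((m + 1) * (n + 1)) ∧
      HasComplexity ((L' \ L) ⊔ (L \ L')) ((m + 1) * (n + 1)) := by
  have hm0 : 0 < m := by omega
  have hn0 : 0 < n := by omega
  have hA : alphabetOf (LW 1 3 m) = {a : Fin 4 | a ≠ 3} :=
    alphabetOf_LW 1 3 (by decide) m hm0
  have hB : alphabetOf (LW 2 0 n) = {a : Fin 4 | a ≠ 0} :=
    alphabetOf_LW 2 0 (by decide) n hn0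
  have e1 : {a : Fin 4 | a ≠ 3} = (({0, 1, 2} : Finset (Fin 4)) : Set (Fin 4)) := by
    ext a
    show a ≠ 3 ↔ _
    simp only [Finset.coe_insert, Finset.coe_singleton, Set.mem_insert_iff,
      Set.mem_singleton_iff]
    revert a
    decide
  have e2 : {a : Fin 4 | a ≠ 0} = (({1, 2, 3} : Finset (Fin 4)) : Set (Fin 4)) := by
    ext a
    show a ≠ 0 ↔ _
    simp only [Finset.coe_insert, Finset.coe_singleton, Set.mem_insert_iff,
      Set.mem_singleton_iff]
    revert a
    decide
  have e3 : {a : Fin 4 | a ≠ 3} ∩ {a : Fin 4 | a ≠ 0}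
      = (({1, 2} : Finset (Fin 4)) : Set (Fin 4)) := by
    ext a
    show a ≠ 3 ∧ a ≠ 0 ↔ _
    simp only [Finset.coe_insert, Finset.coe_singleton, Set.mem_insert_iff,
      Set.mem_singleton_iff]
    revert a
    decide
  refine ⟨LW 1 3 m, LW 2 0 n, ?_, ?_, ?_, ?_, ?_, ?_, ?_, ?_, ?_⟩
  · rw [hA, e1, Set.ncard_coe_finset]
    decide
  · rw [hB, e2, Set.ncard_coe_finset]
    decide
  · rw [hA, hB, e3, Set.ncard_coe_finset]
    decide
  · rw [hA, hB]
    exact ⟨0, by decide, by decide⟩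
  · rw [hA, hB]
    exact ⟨3, by decide, by decide⟩
  · exact hasComplexity_LW 1 3 (by decide) m hm0
  · exact hasComplexity_LW 2 0 (by decide) n hn0
  · constructor
    · rw [quotientSet_union m n hm0 hn0]
      exact (prodS_finite m n).image _
    · rw [quotientSet_union m n hm0 hn0, Set.ncard_image_of_injOn (QU_injOn m n),
        prodS_ncard]
  · constructor
    · rw [quotientSet_sdiff m n hm0 hn0]
      exact (prodS_finite m n).image _
    · rw [quotientSet_sdiff m n hm0 hn0, Set.ncard_image_of_injOn (QD_injOn m n),
        prodS_ncard]
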